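/- Suppose the random vector ε ∈ ℝⁿ satisfies: for all t and all a ∈ ℝⁿ, P{(Σᵢ aᵢεᵢ)² > t² Σᵢ aᵢ²} ≤ 2exp(-t²/(2σ²)). Let X be an n×p matrix with columns V_j and q ∈ (0,1/2). Then with probability at least 1-2q, ‖Xᵀε‖_∞ ≤ σ√(2ln(p/q)) · max_j ‖V_j‖₂, and consequently for all u ∈ ℝᵖ, |⟨ε, (Xu - Xβ)/2⟩| ≤ (σ/2)√(2ln(p/q)) max_j‖V_j‖₂ · ‖u-β‖₁. -/

import Mathlib

open MeasureTheory

/-- Under the sub-Gaussian tail assumption, with probability at least `1-2q`,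
`‖Xᵀε‖_∞ ≤ σ√(2 ln(p/q)) maxⱼ‖Vⱼ‖₂`, and consequently for all `u`,
`|⟨ε, (Xu - Xβ)/2⟩| ≤ (σ/2)√(2 ln(p/q)) maxⱼ‖Vⱼ‖₂ ‖u-β‖₁`. -/
theorem subgaussian_sup_bound {Ω : Type*} [MeasurableSpace Ω] (P : Measure Ω)
    [IsProbabilityMeasure P] (n p : ℕ) (hp : 0 < p)
    (hnep : (Finset.univ : Finset (Fin p)).Nonempty)
    (ε : Ω → Fin n → ℝ) (σ : ℝ) (hσ : 0 < σ)
    (X : Matrix (Fin n) (Fin p) ℝ) (β : Fin p → ℝ)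
    (q : ℝ) (hq0 : 0 < q) (hq1 : q < 1 / 2)
    (htail : ∀ (t : ℝ) (a : Fin n → ℝ),
      P {ω | t ^ 2 * ∑ i, a i ^ 2 < (∑ i, a i * ε ω i) ^ 2}
        ≤ ENNReal.ofReal (2 * Real.exp (-t ^ 2 / (2 * σ ^ 2)))) :
    ENNReal.ofReal (1 - 2 * q) ≤
      P {ω |
        (∀ j, |∑ i, ε ω i * X i j| ≤
          σ * Real.sqrt (2 * Real.log (p / q)) *
            Finset.univ.sup' hnep fun j' => Real.sqrt (∑ i, X i j' ^ 2)) ∧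
        ∀ u : Fin p → ℝ,
          |∑ i, ε ω i * (((∑ j, X i j * u j) - ∑ j, X i j * β j) / 2)| ≤
            σ / 2 * Real.sqrt (2 * Real.log (p / q)) *
              (Finset.univ.sup' hnep fun j' => Real.sqrt (∑ i, X i j' ^ 2)) *
              ∑ j, |u j - β j|} := by
  set M : ℝ := Finset.univ.sup' hnep fun j' => Real.sqrt (∑ i, X i j' ^ 2) with hM
  set t : ℝ := σ * Real.sqrt (2 * Real.log (p / q)) with ht
  have hp1 : (1:ℝ) ≤ p := by exact_mod_cast hp
  have hpq1 : (1:ℝ) < p / q := by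
    rw [lt_div_iff₀ hq0]; nlinarith
  have hlog : 0 < Real.log (p / q) := Real.log_pos hpq1
  have ht0 : 0 ≤ t := mul_nonneg hσ.le (Real.sqrt_nonneg _)
  have hM0 : 0 ≤ M := le_trans (Real.sqrt_nonneg _)
    (Finset.le_sup' (fun j' => Real.sqrt (∑ i, X i j' ^ 2)) (Finset.mem_univ hnep.choose))
  have ht2 : t ^ 2 = σ ^ 2 * (2 * Real.log (p / q)) := by
    rw [ht, mul_pow, Real.sq_sqrt (by positivity)]
  have hexp : 2 * Real.exp (-t ^ 2 / (2 * σ ^ 2)) = 2 * q / p := by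
    rw [ht2]
    have h1 : -(σ ^ 2 * (2 * Real.log (p / q))) / (2 * σ ^ 2) = -Real.log (p / q) := by
      field_simp
    rw [h1, Real.exp_neg, Real.exp_log (by linarith)]
    field_simp
  -- Bad event
  have hbad : P {ω | ∃ j, t ^ 2 * ∑ i, X i j ^ 2 < (∑ i, X i j * ε ω i) ^ 2}
      ≤ ENNReal.ofReal (2 * q) := by
    have heq : {ω | ∃ j, t ^ 2 * ∑ i, X i j ^ 2 < (∑ i, X i j * ε ω i) ^ 2}
        = ⋃ j, {ω | t ^ 2 * ∑ i, (X i j) ^ 2 < (∑ i, X i j * ε ω i) ^ 2} := by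
      ext ω; simp [Set.mem_iUnion]
    rw [heq]
    calc P (⋃ j, {ω | t ^ 2 * ∑ i, (X i j) ^ 2 < (∑ i, X i j * ε ω i) ^ 2})
        ≤ ∑' j, P {ω | t ^ 2 * ∑ i, (X i j) ^ 2 < (∑ i, X i j * ε ω i) ^ 2} :=
          measure_iUnion_le _
      _ ≤ ∑' _j : Fin p, ENNReal.ofReal (2 * q / p) := by
          refine ENNReal.tsum_le_tsum fun j => ?_
          have := htail t (fun i => X i j)
          rw [hexp] at this
          exact this
      _ = ENNReal.ofReal (2 * q) := by
          rw [tsum_fintype, Finset.sum_const, Finset.card_univ, Fintype.card_fin,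
            nsmul_eq_mul, ← ENNReal.ofReal_natCast, ← ENNReal.ofReal_mul (by positivity)]
          congr 1
          field_simp
  -- Good event inclusion
  have hgood : {ω | ∀ j, (∑ i, X i j * ε ω i) ^ 2 ≤ t ^ 2 * ∑ i, X i j ^ 2} ⊆
      {ω |
        (∀ j, |∑ i, ε ω i * X i j| ≤ t * M) ∧
        ∀ u : Fin p → ℝ,
          |∑ i, ε ω i * (((∑ j, X i j * u j) - ∑ j, X i j * β j) / 2)| ≤
            σ / 2 * Real.sqrt (2 * Real.log (p / q)) * M * ∑ j, |u j - β j|} := by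
    intro ω hω
    have key : ∀ j, |∑ i, X i j * ε ω i| ≤ t * M := by
      intro j
      have h1 : |∑ i, X i j * ε ω i| ≤ t * Real.sqrt (∑ i, X i j ^ 2) := by
        rw [← Real.sqrt_sq_eq_abs]
        calc Real.sqrt ((∑ i, X i j * ε ω i) ^ 2)
            ≤ Real.sqrt (t ^ 2 * ∑ i, X i j ^ 2) := Real.sqrt_le_sqrt (hω j)
          _ = t * Real.sqrt (∑ i, X i j ^ 2) := by
              rw [Real.sqrt_mul (by positivity), Real.sqrt_sq ht0]
      refine h1.trans (mul_le_mul_of_nonneg_left ?_ ht0)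
      exact Finset.le_sup' (fun j' => Real.sqrt (∑ i, X i j' ^ 2)) (Finset.mem_univ j)
    constructor
    · intro j
      have := key j
      simpa [mul_comm] using this
    · intro u
      have hswap : ∑ i, ε ω i * (((∑ j, X i j * u j) - ∑ j, X i j * β j) / 2)
          = ∑ j, (u j - β j) / 2 * ∑ i, X i j * ε ω i := by
        have h1 : ∀ i, ε ω i * (((∑ j, X i j * u j) - ∑ j, X i j * β j) / 2)
            = ∑ j, (u j - β j) / 2 * (X i j * ε ω i) := by
          intro i
          rw [← Finset.sum_sub_distrib, Finset.sum_div, Finset.mul_sum]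
          exact Finset.sum_congr rfl fun j _ => by ring
        rw [Finset.sum_congr rfl fun i _ => h1 i, Finset.sum_comm]
        exact Finset.sum_congr rfl fun j _ => by rw [Finset.mul_sum]
      rw [hswap]
      calc |∑ j, (u j - β j) / 2 * ∑ i, X i j * ε ω i|
          ≤ ∑ j, |(u j - β j) / 2 * ∑ i, X i j * ε ω i| :=
            Finset.abs_sum_le_sum_abs _ _
        _ ≤ ∑ j, |u j - β j| / 2 * (t * M) := by
            refine Finset.sum_le_sum fun j _ => ?_
            rw [abs_mul, abs_div]
            simp only [abs_two]
            exact mul_le_mul_of_nonneg_left (key j) (by positivity)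
        _ = σ / 2 * Real.sqrt (2 * Real.log (p / q)) * M * ∑ j, |u j - β j| := by
            rw [← Finset.sum_mul, ← Finset.sum_div, ht]
            ring
  -- Combine
  have hsplit : (1 : ENNReal) ≤
      P {ω | ∀ j, (∑ i, X i j * ε ω i) ^ 2 ≤ t ^ 2 * ∑ i, X i j ^ 2} +
      P {ω | ∃ j, t ^ 2 * ∑ i, X i j ^ 2 < (∑ i, X i j * ε ω i) ^ 2} := by
    have huniv : {ω | ∀ j, (∑ i, X i j * ε ω i) ^ 2 ≤ t ^ 2 * ∑ i, X i j ^ 2} ∪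
        {ω | ∃ j, t ^ 2 * ∑ i, X i j ^ 2 < (∑ i, X i j * ε ω i) ^ 2} = Set.univ := by
      ext ω
      simp only [Set.mem_union, Set.mem_setOf_eq, Set.mem_univ, iff_true]
      by_cases h : ∀ j, (∑ i, X i j * ε ω i) ^ 2 ≤ t ^ 2 * ∑ i, X i j ^ 2
      · exact Or.inl h
      · push_neg at h
        exact Or.inr h
    calc (1 : ENNReal) = P Set.univ := (measure_univ).symm
      _ = P _ := by rw [huniv]
      _ ≤ _ := measure_union_le _ _
  have h1 : (1 : ENNReal) ≤
      P {ω | ∀ j, (∑ i, X i j * ε ω i) ^ 2 ≤ t ^ 2 * ∑ i, X i j ^ 2} +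
        ENNReal.ofReal (2 * q) :=
    hsplit.trans (add_le_add_right hbad _)
  have h2 : ENNReal.ofReal (1 - 2 * q) ≤
      P {ω | ∀ j, (∑ i, X i j * ε ω i) ^ 2 ≤ t ^ 2 * ∑ i, X i j ^ 2} := by
    rw [show (1 : ℝ) - 2 * q = 1 - 2 * q from rfl, ENNReal.ofReal_sub _ (by positivity),
      ENNReal.ofReal_one]
    exact tsub_le_iff_right.mpr h1
  exact h2.trans (measure_mono hgood)
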